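/- There exists a constant $c > 0$ such that for all real $x > 0$ and $\lambda > 1$, $\left| \frac{\lambda x}{\sqrt{1+\lambda^2 x^2}} - \frac{x}{\sqrt{1+x^2}} \right| \geq c\, \frac{\lambda x}{\sqrt{1+\lambda^2 x^2}\,(1+x^2)}\,(1 - \lambda^{-2})$. -/
import Mathlib


theorem stmt4 : ∃ c : ℝ, 0 < c ∧ ∀ x lam : ℝ, 0 < x → 1 < lam →
    c * (lam * x / (Real.sqrt (1 + lam ^ 2 * x ^ 2) * (1 + x ^ 2)) * (1 - lam⁻¹ ^ 2)) ≤
      |lam * x / Real.sqrt (1 + lam ^ 2 * x ^ 2) - x / Real.sqrt (1 + x ^ 2)| := by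
  refine ⟨1/2, by norm_num, fun x lam hx hlam => ?_⟩
  have hlam0 : (0:ℝ) < lam := lt_trans one_pos hlam
  set a := Real.sqrt (1 + x ^ 2) with ha_def
  set b := Real.sqrt (1 + lam ^ 2 * x ^ 2) with hb_def
  have ha2 : a ^ 2 = 1 + x ^ 2 := Real.sq_sqrt (by positivity)
  have hb2 : b ^ 2 = 1 + lam ^ 2 * x ^ 2 := Real.sq_sqrt (by positivity)
  have ha : 0 < a := Real.sqrt_pos.2 (by positivity)
  have hb : 0 < b := Real.sqrt_pos.2 (by positivity)
  have hpos : 0 < b + lam * a := by positivity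
  have hba' : b < lam * a := by nlinarith [ha2, hb2, hpos]
  have hba : b ≤ lam * a := hba'.le
  have hnn : 0 ≤ lam * x / b - x / a := by
    rw [sub_nonneg, div_le_div_iff₀ ha hb]
    nlinarith [mul_pos hx ha, mul_pos hx hb]
  rw [abs_of_nonneg hnn, div_sub_div _ _ hb.ne' ha.ne']
  have hd : 0 < lam * x * a - b * x := by
    nlinarith [mul_pos hx (sub_pos.2 hba')]
  have hkey : (lam * x * a - b * x) * (lam * a + b) = x * (lam ^ 2 - 1) := by
    nlinarith [ha2, hb2]
  have hinv : (1 : ℝ) - lam⁻¹ ^ 2 = (lam ^ 2 - 1) / lam ^ 2 := by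
    field_simp
  rw [hinv, ← ha2]
  have hL : 1/2 * (lam * x / (b * a ^ 2) * ((lam ^ 2 - 1) / lam ^ 2)) =
      (lam * x * (lam ^ 2 - 1)) / (2 * lam ^ 2 * (b * a ^ 2)) := by ring
  rw [hL, div_le_div_iff₀ (by positivity) (by positivity)]
  have hkey' : (lam * x * a - b * x) * (lam * a + b) * (lam * b * a) =
      x * (lam ^ 2 - 1) * (lam * b * a) := by rw [hkey]
  have hP : 0 ≤ (lam * x * a - b * x) * b * a * (lam * a - b) * lam :=
    mul_nonneg (mul_nonneg (mul_nonneg (mul_nonneg hd.le hb.le) ha.le)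
      (sub_nonneg.2 hba)) hlam0.le
  nlinarith [hkey', hP]
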